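/- Bose's inequality via the 2-part framework: let Δ be a resolvable 2-(v,k,λ) design with b blocks, replication number r, and r resolution classes. Label a set of r 'drugs' by the resolution classes and place drug j in every block of class j. Then the rank argument for c-partitionable 2-part designs gives b ≥ v + r - 1. -/

import Mathlib

open Finset
open Matrix

/-- Bose's inequality via the 2-part framework: a resolvable 2-(v,k,λ) design
with b blocks and r resolution classes satisfies b ≥ v + r - 1. -/
theorem bose_inequality
    (v b k lam r : ℕ) (hk1 : 1 < k) (hkv : k < v) (hlam : 0 < lam)
    (A : Fin b → Finset (Fin v))
    (hcard : ∀ i, (A i).card = k)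
    (hdes : ∀ x y : Fin v, x ≠ y →
      (Finset.univ.filter (fun i => x ∈ A i ∧ y ∈ A i)).card = lam)
    (g : Fin b → Fin r)
    -- each resolution class is a partition of the point set
    (hres : ∀ (j : Fin r) (x : Fin v), ∃! i : Fin b, g i = j ∧ x ∈ A i) :
    b + 1 ≥ v + r := by
  classical
  have hv3 : 2 < v := by omega
  -- each point lies in exactly one block of each class
  have hone : ∀ (j : Fin r) (x : Fin v),
      (univ.filter (fun i => g i = j ∧ x ∈ A i)).card = 1 := by
    intro j x
    obtain ⟨i, hi, hu⟩ := hres j x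
    rw [Finset.card_eq_one]
    refine ⟨i, ?_⟩
    ext i'
    simp only [mem_filter, mem_univ, true_and, mem_singleton]
    exact ⟨fun h => hu i' h, fun h => h ▸ hi⟩
  -- replication number is r
  have hrep : ∀ x : Fin v, (univ.filter (fun i => x ∈ A i)).card = r := by
    intro x
    have hU : (univ.filter (fun i => x ∈ A i))
        = (univ : Finset (Fin r)).biUnion
            (fun j => univ.filter (fun i => g i = j ∧ x ∈ A i)) := by
      ext i
      simp only [mem_filter, mem_univ, true_and, mem_biUnion]
      exact ⟨fun h => ⟨g i, rfl, h⟩, fun ⟨j, _, h⟩ => h⟩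
    rw [hU, Finset.card_biUnion]
    · simp [hone]
    · intro j1 _ j2 _ hne
      rw [Function.onFun, Finset.disjoint_left]
      intro i h1 h2
      simp only [mem_filter] at h1 h2
      exact hne (h1.2.1.symm.trans h2.2.1)
  -- class size times k is v
  have hclass : ∀ j : Fin r, (univ.filter (fun i => g i = j)).card * k = v := by
    intro j
    calc (univ.filter (fun i => g i = j)).card * k
        = ∑ i ∈ univ.filter (fun i => g i = j), (A i).card := by
          rw [Finset.sum_congr rfl (fun i _ => hcard i), Finset.sum_const, smul_eq_mul]
      _ = ∑ i ∈ univ.filter (fun i => g i = j), ∑ x : Fin v, if x ∈ A i then 1 else 0 := by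
          refine Finset.sum_congr rfl (fun i _ => ?_)
          rw [← Finset.card_filter]
          congr 1
          exact (Finset.filter_univ_mem (A i)).symm
      _ = ∑ x : Fin v, ∑ i ∈ univ.filter (fun i => g i = j), if x ∈ A i then 1 else 0 :=
          Finset.sum_comm
      _ = ∑ x : Fin v, (univ.filter (fun i => g i = j ∧ x ∈ A i)).card := by
          refine Finset.sum_congr rfl (fun x _ => ?_)
          rw [← Finset.card_filter, Finset.filter_filter]
      _ = v := by simp [hone]
  set x0 : Fin v := ⟨0, by omega⟩ with hx0
  -- the basic identity r(k-1) = lam(v-1)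
  have hid : r * (k - 1) = lam * (v - 1) := by
    have key : ∀ i : Fin b,
        ((univ.erase x0).filter (fun y => x0 ∈ A i ∧ y ∈ A i)).card
          = if x0 ∈ A i then k - 1 else 0 := by
      intro i
      by_cases h : x0 ∈ A i
      · have : (univ.erase x0).filter (fun y => x0 ∈ A i ∧ y ∈ A i) = (A i).erase x0 := by
          ext y
          simp only [mem_filter, mem_erase, mem_univ, and_true, true_and, h]
        rw [this, if_pos h, Finset.card_erase_of_mem h, hcard]
      · simp [h]
    calc r * (k - 1)
        = ∑ i ∈ univ.filter (fun i => x0 ∈ A i), (k - 1) := by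
          rw [Finset.sum_const, smul_eq_mul, hrep]
      _ = ∑ i : Fin b, if x0 ∈ A i then k - 1 else 0 := by
          rw [Finset.sum_filter]
      _ = ∑ i : Fin b, ((univ.erase x0).filter (fun y => x0 ∈ A i ∧ y ∈ A i)).card := by
          exact Finset.sum_congr rfl (fun i _ => (key i).symm)
      _ = ∑ i : Fin b, ∑ y ∈ univ.erase x0, if x0 ∈ A i ∧ y ∈ A i then 1 else 0 := by
          exact Finset.sum_congr rfl (fun i _ => Finset.card_filter _ _)
      _ = ∑ y ∈ univ.erase x0, ∑ i : Fin b, if x0 ∈ A i ∧ y ∈ A i then 1 else 0 :=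
          Finset.sum_comm
      _ = ∑ y ∈ univ.erase x0, (univ.filter (fun i => x0 ∈ A i ∧ y ∈ A i)).card := by
          exact Finset.sum_congr rfl (fun y _ => (Finset.card_filter _ _).symm)
      _ = ∑ y ∈ univ.erase x0, lam := by
          refine Finset.sum_congr rfl (fun y hy => ?_)
          exact hdes x0 y (Ne.symm (Finset.ne_of_mem_erase hy))
      _ = lam * (v - 1) := by
          rw [Finset.sum_const, smul_eq_mul, Finset.card_erase_of_mem (mem_univ _),
            Finset.card_univ, Fintype.card_fin, Nat.mul_comm]
  have hr0 : 0 < r := by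
    have hxy : x0 ≠ (⟨1, by omega⟩ : Fin v) := by simp [hx0, Fin.ext_iff]
    have hc := hdes _ _ hxy
    obtain ⟨i, hi⟩ := Finset.card_pos.mp (by rw [hc]; exact hlam)
    simp only [mem_filter] at hi
    rw [← hrep x0]
    exact Finset.card_pos.mpr ⟨i, by simp [hi.2.1]⟩
  have hlr : lam < r := by
    have h1 : lam * (k - 1) < r * (k - 1) := by
      rw [hid]
      exact Nat.mul_lt_mul_of_pos_left (by omega) hlam
    exact Nat.lt_of_mul_lt_mul_right h1
  -- the stacked incidence matrix over ℚ
  let N : Matrix (Fin v ⊕ Fin r) (Fin b) ℚ :=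
    Matrix.of (fun p i => Sum.elim (fun x => if x ∈ A i then (1:ℚ) else 0)
      (fun j => if g i = j then (1:ℚ) else 0) p)
  have hsum : ∀ (P Q : Fin b → Prop) [DecidablePred P] [DecidablePred Q],
      (∑ i, (if P i then (1:ℚ) else 0) * (if Q i then 1 else 0))
        = ((univ.filter (fun i => P i ∧ Q i)).card : ℚ) := by
    intro P Q _ _
    rw [Finset.card_filter]
    push_cast
    refine Finset.sum_congr rfl (fun i _ => ?_)
    by_cases hP : P i <;> by_cases hQ : Q i <;> simp [hP, hQ]
  have h11 : ∀ x y : Fin v, (N * Nᵀ) (Sum.inl x) (Sum.inl y)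
      = if x = y then (r : ℚ) else (lam : ℚ) := by
    intro x y
    rw [Matrix.mul_apply]
    simp only [Matrix.transpose_apply, N, Matrix.of_apply, Sum.elim_inl]
    rw [hsum]
    by_cases h : x = y
    · subst h
      simp only [and_self, eq_self_iff_true, if_true]
      rw [hrep]
    · rw [if_neg h, hdes x y h]
  have h12 : ∀ (x : Fin v) (j : Fin r), (N * Nᵀ) (Sum.inl x) (Sum.inr j) = 1 := by
    intro x j
    rw [Matrix.mul_apply]
    simp only [Matrix.transpose_apply, N, Matrix.of_apply, Sum.elim_inl, Sum.elim_inr]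
    rw [hsum]
    have hfc : (univ.filter (fun i => x ∈ A i ∧ g i = j))
        = (univ.filter (fun i => g i = j ∧ x ∈ A i)) := by
      apply Finset.filter_congr
      intro i _
      exact and_comm
    rw [hfc, hone]
    norm_num
  have h21 : ∀ (j : Fin r) (x : Fin v), (N * Nᵀ) (Sum.inr j) (Sum.inl x) = 1 := by
    intro j x
    rw [Matrix.mul_apply]
    simp only [Matrix.transpose_apply, N, Matrix.of_apply, Sum.elim_inl, Sum.elim_inr]
    rw [hsum, hone]
    norm_num
  have h22 : ∀ j j' : Fin r, (N * Nᵀ) (Sum.inr j) (Sum.inr j')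
      = if j = j' then ((univ.filter (fun i => g i = j)).card : ℚ) else 0 := by
    intro j j'
    rw [Matrix.mul_apply]
    simp only [Matrix.transpose_apply, N, Matrix.of_apply, Sum.elim_inr]
    rw [hsum]
    by_cases h : j = j'
    · subst h
      simp only [and_self, eq_self_iff_true, if_true]
    · rw [if_neg h]
      norm_cast
      rw [Finset.card_eq_zero, Finset.filter_eq_empty_iff]
      intro i _
      rintro ⟨h1, h2⟩
      exact h (h1.symm.trans h2)
  have hrlam : (r:ℚ) - lam ≠ 0 := by
    have hq : (lam:ℚ) < r := by exact_mod_cast hlr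
    exact sub_ne_zero.mpr (ne_of_gt hq)
  let e : (Fin v ⊕ Fin r) → ℚ := Sum.elim (fun _ => (1:ℚ)) (fun _ => -(k:ℚ))
  have hker : ∀ u : (Fin v ⊕ Fin r) → ℚ, (N * Nᵀ).mulVec u = 0 →
      u = u (Sum.inl x0) • e := by
    intro u hu
    set S := ∑ y : Fin v, u (Sum.inl y) with hS
    set T := ∑ j : Fin r, u (Sum.inr j) with hT
    have row1 : ∀ y : Fin v,
        ((r:ℚ) - lam) * u (Sum.inl y) + ((lam:ℚ) * S + T) = 0 := by
      intro y
      have h := congrFun hu (Sum.inl y)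
      simp only [Matrix.mulVec, dotProduct, Pi.zero_apply] at h
      rw [Fintype.sum_sum_type] at h
      simp only [h11, h12, one_mul] at h
      have e1 : ∀ y' : Fin v, (if y = y' then (r:ℚ) else (lam:ℚ)) * u (Sum.inl y')
          = (lam:ℚ) * u (Sum.inl y')
            + (if y = y' then ((r:ℚ) - lam) * u (Sum.inl y') else 0) := by
        intro y'
        by_cases hh : y = y' <;> simp [hh] <;> ring
      rw [Finset.sum_congr rfl (fun y' _ => e1 y')] at h
      rw [Finset.sum_add_distrib, ← Finset.mul_sum, Finset.sum_ite_eq] at h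
      simp only [mem_univ, if_true] at h
      rw [← hS, ← hT] at h
      linear_combination h
    have hconst : ∀ y : Fin v, u (Sum.inl y) = u (Sum.inl x0) := by
      intro y
      exact mul_left_cancel₀ hrlam (by linear_combination (row1 y) - (row1 x0))
    have hSv : S = (v:ℚ) * u (Sum.inl x0) := by
      rw [hS, Finset.sum_congr rfl (fun y _ => hconst y), Finset.sum_const,
        Finset.card_univ, Fintype.card_fin, nsmul_eq_mul]
    have row2 : ∀ j : Fin r, u (Sum.inr j) = -(k:ℚ) * u (Sum.inl x0) := by
      intro j
      have h := congrFun hu (Sum.inr j)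
      simp only [Matrix.mulVec, dotProduct, Pi.zero_apply] at h
      rw [Fintype.sum_sum_type] at h
      simp only [h21, h22, one_mul] at h
      simp only [ite_mul, zero_mul] at h
      rw [Finset.sum_ite_eq] at h
      simp only [mem_univ, if_true] at h
      rw [← hS, hSv] at h
      have hmj : ((univ.filter (fun i => g i = j)).card : ℚ) * k = v := by
        exact_mod_cast hclass j
      have hmj0 : ((univ.filter (fun i => g i = j)).card : ℚ) ≠ 0 := by
        intro h0
        rw [h0, zero_mul] at hmj
        have hvq : (0:ℚ) < v := by exact_mod_cast (by omega : 0 < v)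
        linarith
      apply mul_left_cancel₀ hmj0
      linear_combination h + u (Sum.inl x0) * hmj
    funext p
    cases p with
    | inl y =>
      show u (Sum.inl y) = u (Sum.inl x0) • e (Sum.inl y)
      simp [e, hconst y]
    | inr j =>
      show u (Sum.inr j) = u (Sum.inl x0) • e (Sum.inr j)
      rw [row2 j]
      simp only [e, Sum.elim_inr, smul_eq_mul]
      ring
  have hNrank : N.rank ≤ b := by
    simpa using Matrix.rank_le_card_width N
  have hMN : (N * Nᵀ).rank = N.rank := Matrix.rank_self_mul_transpose N
  have hdim : (N * Nᵀ).rank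
      + Module.finrank ℚ (LinearMap.ker (N * Nᵀ).mulVecLin) = v + r := by
    have h := LinearMap.finrank_range_add_finrank_ker (N * Nᵀ).mulVecLin
    rw [Module.finrank_fintype_fun_eq_card] at h
    simpa [Matrix.rank] using h
  have he0 : e ≠ 0 := by
    intro h0
    have := congrFun h0 (Sum.inl x0)
    simp [e] at this
  have hkerle : Module.finrank ℚ (LinearMap.ker (N * Nᵀ).mulVecLin) ≤ 1 := by
    have hsub : LinearMap.ker (N * Nᵀ).mulVecLin ≤ Submodule.span ℚ {e} := by
      intro u hu
      rw [LinearMap.mem_ker, Matrix.mulVecLin_apply] at hu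
      rw [hker u hu]
      exact Submodule.smul_mem _ _ (Submodule.mem_span_singleton_self e)
    calc Module.finrank ℚ (LinearMap.ker (N * Nᵀ).mulVecLin)
        ≤ Module.finrank ℚ (Submodule.span ℚ {e}) := Submodule.finrank_mono hsub
      _ = 1 := finrank_span_singleton he0
  omega
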